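/- Let N ≥ 1 and g : ℕ → ℂ. The coefficient of η^N in the polynomial Σ_{j=0}^N (1/j!) (Σ_{k=1}^N g_k η^k)^j equals Σ_{λ ⊢ N} (1/δ(λ)!) Π_{a∈λ} g_a, the sum over all integer partitions of N. -/

import Mathlib

noncomputable section

/-- `δ(λ)! = Π_k μ_k(λ)!`, the product of the factorials of the multiplicities of the
parts of the partition `λ`. -/
def deltaFac {n : ℕ} (p : n.Partition) : ℕ :=
  ∏ k ∈ p.parts.toFinset, (Multiset.count k p.parts).factorial

/-- The weight `(1/δ(λ)!) Π_{a∈λ} g_a` of a partition `λ`. -/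
def partWeight (g : ℕ → ℂ) {n : ℕ} (p : n.Partition) : ℂ :=
  ((deltaFac p : ℂ))⁻¹ * (p.parts.map g).prod

open Finset Polynomial


/-- the multiset built from a multiplicity function -/
def mOf (N : ℕ) (k : ℕ → ℕ) : Multiset ℕ := ∑ i ∈ Finset.Icc 1 N, Multiset.replicate (k i) i

lemma count_mOf (N : ℕ) (k : ℕ → ℕ) (a : ℕ) :
    Multiset.count a (mOf N k) = if a ∈ Finset.Icc 1 N then k a else 0 := by
  rw [mOf, Multiset.count_sum']
  simp [Multiset.count_replicate, Finset.sum_ite_eq' (Finset.Icc 1 N) a k]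

lemma sum_mOf (N : ℕ) (k : ℕ → ℕ) : (mOf N k).sum = ∑ i ∈ Finset.Icc 1 N, i * k i := by
  rw [mOf, Multiset.sum_sum]
  simp [Multiset.sum_replicate, smul_eq_mul, mul_comm]

lemma card_mOf (N : ℕ) (k : ℕ → ℕ) :
    Multiset.card (mOf N k) = ∑ i ∈ Finset.Icc 1 N, k i := by
  rw [mOf, Multiset.card_sum]; simp

lemma pos_mOf (N : ℕ) (k : ℕ → ℕ) {a : ℕ} (ha : a ∈ mOf N k) : 0 < a := by
  have := Multiset.count_pos.mpr ha
  rw [count_mOf] at this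
  by_contra h
  have : a ∉ Finset.Icc 1 N := by simp; omega
  simp_all

lemma mem_Icc_of_mem_parts {N : ℕ} (p : N.Partition) {a : ℕ} (ha : a ∈ p.parts) :
    a ∈ Finset.Icc 1 N := by
  rw [Finset.mem_Icc]
  exact ⟨p.parts_pos ha, (Multiset.le_sum_of_mem ha).trans_eq p.parts_sum⟩

lemma mOf_counts {N : ℕ} (p : N.Partition) :
    mOf N (fun i => Multiset.count i p.parts) = p.parts := by
  ext a
  rw [count_mOf]
  split_ifs with h
  · rfl
  · exact (Multiset.count_eq_zero.mpr fun ha => h (mem_Icc_of_mem_parts p ha)).symm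

lemma sum_count {N : ℕ} (p : N.Partition) :
    ∑ i ∈ Finset.Icc 1 N, Multiset.count i p.parts = Multiset.card p.parts := by
  rw [← Multiset.toFinset_sum_count_eq]
  exact (Finset.sum_subset (fun a ha => mem_Icc_of_mem_parts p (Multiset.mem_toFinset.mp ha))
    (fun a _ ha => Multiset.count_eq_zero.mpr fun h => ha (Multiset.mem_toFinset.mpr h))).symm

lemma sum_mul_count {N : ℕ} (p : N.Partition) :
    ∑ i ∈ Finset.Icc 1 N, i * Multiset.count i p.parts = N := by
  have := sum_mOf N (fun i => Multiset.count i p.parts)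
  rw [mOf_counts p, p.parts_sum] at this
  exact this.symm

lemma card_le {N : ℕ} (p : N.Partition) : Multiset.card p.parts ≤ N := by
  calc Multiset.card p.parts = (p.parts.map (fun _ => 1)).sum := by simp
  _ ≤ (p.parts.map id).sum := Multiset.sum_map_le_sum_map _ _ fun i hi => p.parts_pos hi
  _ = N := by rw [Multiset.map_id, p.parts_sum]

lemma partWeight_eq (N : ℕ) (g : ℕ → ℂ) (p : N.Partition) :
    partWeight g p =
      ((∏ i ∈ Finset.Icc 1 N, (Multiset.count i p.parts).factorial : ℕ) : ℂ)⁻¹ *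
        ∏ i ∈ Finset.Icc 1 N, g i ^ Multiset.count i p.parts := by
  rw [partWeight, deltaFac, Finset.prod_multiset_map_count]
  congr 1
  · congr 2
    exact Finset.prod_subset
      (fun a ha => mem_Icc_of_mem_parts p (Multiset.mem_toFinset.mp ha))
      (fun a _ ha => by
        rw [Multiset.count_eq_zero.mpr fun h => ha (Multiset.mem_toFinset.mpr h)]
        rfl)
  · exact Finset.prod_subset
      (fun a ha => mem_Icc_of_mem_parts p (Multiset.mem_toFinset.mp ha))
      (fun a _ ha => by
        rw [Multiset.count_eq_zero.mpr fun h => ha (Multiset.mem_toFinset.mpr h), pow_zero])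

lemma coeff_pow (N j : ℕ) (g : ℕ → ℂ) :
    ((∑ k ∈ Finset.Icc 1 N, Polynomial.C (g k) * Polynomial.X ^ k) ^ j).coeff N
      = ∑ k ∈ Finset.piAntidiag (Finset.Icc 1 N) j,
          if ∑ i ∈ Finset.Icc 1 N, i * k i = N then
            (Nat.multinomial (Finset.Icc 1 N) k : ℂ) * ∏ i ∈ Finset.Icc 1 N, g i ^ k i
          else 0 := by
  rw [Finset.sum_pow_eq_sum_piAntidiag, Polynomial.finset_sum_coeff]
  refine Finset.sum_congr rfl fun k hk => ?_
  have h1 : (Nat.multinomial (Finset.Icc 1 N) k : ℂ[X]) *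
        ∏ i ∈ Finset.Icc 1 N, (Polynomial.C (g i) * Polynomial.X ^ i) ^ (k i)
      = Polynomial.C ((Nat.multinomial (Finset.Icc 1 N) k : ℂ) *
          ∏ i ∈ Finset.Icc 1 N, g i ^ k i) *
        Polynomial.X ^ (∑ i ∈ Finset.Icc 1 N, i * k i) := by
    simp_rw [mul_pow, ← pow_mul, Finset.prod_mul_distrib, Finset.prod_pow_eq_pow_sum,
      ← Polynomial.C_pow, ← map_prod, map_mul, Polynomial.C_eq_natCast, mul_assoc]
  rw [h1, Polynomial.coeff_C_mul, Polynomial.coeff_X_pow]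
  simp only [mul_ite, mul_one, mul_zero]
  exact if_congr eq_comm rfl rfl


/-- The coefficient of `η^N` in `Σ_{j=0}^N (1/j!)(Σ_{k=1}^N g_k η^k)^j` equals
`Σ_{λ ⊢ N} (1/δ(λ)!) Π_{a∈λ} g_a`, the sum over all integer partitions of `N`. -/
theorem coeff_eq_sum_over_partitions (N : ℕ) (hN : 1 ≤ N) (g : ℕ → ℂ) :
    Polynomial.coeff
        (∑ j ∈ Finset.range (N + 1),
          Polynomial.C ((Nat.factorial j : ℂ))⁻¹ *
            (∑ k ∈ Finset.Icc 1 N, Polynomial.C (g k) * Polynomial.X ^ k) ^ j) N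
      = ∑ p : N.Partition, partWeight g p := by
  classical
  rw [Polynomial.finset_sum_coeff]
  simp_rw [Polynomial.coeff_C_mul, coeff_pow, Finset.mul_sum]
  have key : ∀ j ∈ Finset.range (N + 1), ∀ k ∈ Finset.piAntidiag (Finset.Icc 1 N) j,
      ((Nat.factorial j : ℂ))⁻¹ *
        (if ∑ i ∈ Finset.Icc 1 N, i * k i = N then
          (Nat.multinomial (Finset.Icc 1 N) k : ℂ) * ∏ i ∈ Finset.Icc 1 N, g i ^ k i
        else 0)
      = if ∑ i ∈ Finset.Icc 1 N, i * k i = N then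
          ((∏ i ∈ Finset.Icc 1 N, (k i).factorial : ℕ) : ℂ)⁻¹ *
            ∏ i ∈ Finset.Icc 1 N, g i ^ k i
        else 0 := by
    intro j hj k hk
    rw [Finset.mem_piAntidiag] at hk
    have hspec : ((∏ i ∈ Finset.Icc 1 N, (k i).factorial : ℕ) : ℂ) *
        (Nat.multinomial (Finset.Icc 1 N) k : ℂ) = ((Nat.factorial j : ℕ) : ℂ) := by
      rw [← Nat.cast_mul, Nat.multinomial_spec, hk.1]
    have h1 : ((∏ i ∈ Finset.Icc 1 N, (k i).factorial : ℕ) : ℂ) ≠ 0 :=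
      Nat.cast_ne_zero.mpr (Finset.prod_ne_zero_iff.mpr fun i _ => (Nat.factorial_pos _).ne')
    have h2 : ((Nat.factorial j : ℂ)) ≠ 0 := Nat.cast_ne_zero.mpr (Nat.factorial_pos _).ne'
    have h3 : ((Nat.factorial j : ℂ))⁻¹ * (Nat.multinomial (Finset.Icc 1 N) k : ℂ)
        = ((∏ i ∈ Finset.Icc 1 N, (k i).factorial : ℕ) : ℂ)⁻¹ := by
      refine mul_left_cancel₀ h1 ?_
      rw [mul_left_comm, hspec, inv_mul_cancel₀ h2, mul_inv_cancel₀ h1]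
    split_ifs with h
    · rw [← mul_assoc, h3]
    · rw [mul_zero]
  rw [Finset.sum_congr rfl fun j hj => Finset.sum_congr rfl fun k hk => key j hj k hk]
  have hsig : (∑ j ∈ Finset.range (N + 1), ∑ k ∈ Finset.piAntidiag (Finset.Icc 1 N) j,
        if ∑ i ∈ Finset.Icc 1 N, i * k i = N then
          ((∏ i ∈ Finset.Icc 1 N, (k i).factorial : ℕ) : ℂ)⁻¹ *
            ∏ i ∈ Finset.Icc 1 N, g i ^ k i
        else 0)
      = ∑ x ∈ ((Finset.range (N + 1)).sigma fun j =>
            Finset.piAntidiag (Finset.Icc 1 N) j).filter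
            (fun x => ∑ i ∈ Finset.Icc 1 N, i * x.2 i = N),
          ((∏ i ∈ Finset.Icc 1 N, (x.2 i).factorial : ℕ) : ℂ)⁻¹ *
            ∏ i ∈ Finset.Icc 1 N, g i ^ x.2 i := by
    rw [Finset.sum_filter, Finset.sum_sigma]
  rw [hsig]
  refine Finset.sum_bij'
    (i := fun x hx =>
      (⟨mOf N x.2, fun ha => pos_mOf N x.2 ha, ?_⟩ : N.Partition))
    (j := fun p _ => ⟨Multiset.card p.parts, fun i => Multiset.count i p.parts⟩)
    ?_ ?_ ?_ ?_ ?_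
  · -- parts_sum
    rw [sum_mOf]
    exact (Finset.mem_filter.mp hx).2
  · intro a ha
    exact Finset.mem_univ _
  · intro p _
    rw [Finset.mem_filter, Finset.mem_sigma, Finset.mem_range, Finset.mem_piAntidiag]
    refine ⟨⟨Nat.lt_succ_of_le (card_le p), sum_count p, fun i hi => ?_⟩, sum_mul_count p⟩
    exact mem_Icc_of_mem_parts p (Multiset.count_pos.mp (Nat.pos_of_ne_zero hi))
  · intro x hx
    rw [Finset.mem_filter, Finset.mem_sigma, Finset.mem_piAntidiag] at hx
    refine Sigma.ext ?_ (heq_of_eq (funext fun a => ?_))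
    · simpa [card_mOf] using hx.1.2.1
    · simp only [count_mOf]
      split_ifs with h
      · rfl
      · exact by_contra fun hne => h (hx.1.2.2 a (Ne.symm hne))
  · intro p _
    ext1
    exact mOf_counts p
  · intro x hx
    rw [Finset.mem_filter, Finset.mem_sigma, Finset.mem_piAntidiag] at hx
    rw [partWeight_eq]
    have hc : ∀ a ∈ Finset.Icc 1 N,
        Multiset.count a (mOf N x.2) = x.2 a := fun a ha => by
      rw [count_mOf, if_pos ha]
    congr 1
    · congr 2
      exact (Finset.prod_congr rfl fun a ha => by rw [hc a ha]).symm
    · exact (Finset.prod_congr rfl fun a ha => by rw [hc a ha]).symm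

end
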